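/- arXiv:1508.05622 — 4 statements merged into one kernel-verified Lean document; each statement's English description precedes it below -/
import Mathlib

section
/- Let x ∈ R^r_+ have rationally independent coordinates and let {v_s} be its Brun orbit (v_0 = x, v_{s+1} = T v_s, where T subtracts the second-largest coordinate from the largest). Then for every index i and every h ∈ N, there exists m > h such that the largest coordinate of v_m is in position i, i.e., the index i occurs as the 'maximal index' infinitely often along the Brun orbit. -/
/-- One Brun step preserves linear independence over ℚ. -/
lemma brun_indep {r : ℕ} {x : Fin r → ℝ} (hx : LinearIndependent ℚ x)
    {m s : Fin r} (hsm : s ≠ m) :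
    LinearIndependent ℚ (Function.update x m (x m - x s)) := by
  rw [Fintype.linearIndependent_iff] at hx ⊢
  intro g hg
  set g' : Fin r → ℚ := Function.update g s (g s - g m) with hg'
  have e1 : (fun i => g' i • x i) = Function.update (fun i => g i • x i) s ((g s - g m) • x s) := by
    ext i
    rcases eq_or_ne i s with rfl | hi
    · simp [g']
    · simp [g', Function.update_of_ne hi]
  have e2 : (fun i => g i • Function.update x m (x m - x s) i)
      = Function.update (fun i => g i • x i) m (g m • (x m - x s)) := by
    ext i
    rcases eq_or_ne i m with rfl | hi
    · simp
    · simp [Function.update_of_ne hi]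
  have h1 : ∑ i, g' i • x i = (∑ i, g i • x i) - g m • x s := by
    rw [show (∑ i, g' i • x i)
        = ∑ i, Function.update (fun i => g i • x i) s ((g s - g m) • x s) i from by rw [← e1]]
    rw [Finset.sum_update_of_mem (Finset.mem_univ s),
      Finset.sum_eq_sum_sdiff_singleton_add (Finset.mem_univ s) (fun i => g i • x i),
      sub_smul]
    abel
  have h2 : ∑ i, g i • Function.update x m (x m - x s) i = (∑ i, g i • x i) - g m • x s := by
    rw [show (∑ i, g i • Function.update x m (x m - x s) i)
        = ∑ i, Function.update (fun i => g i • x i) m (g m • (x m - x s)) i from by rw [← e2]]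
    rw [Finset.sum_update_of_mem (Finset.mem_univ m),
      Finset.sum_eq_sum_sdiff_singleton_add (Finset.mem_univ m) (fun i => g i • x i),
      smul_sub]
    abel
  have key : ∑ i, g' i • x i = 0 := by rw [h1, ← h2]; exact hg
  have h0 := hx g' key
  have hm0 : g m = 0 := by
    simpa [g', Function.update_of_ne (Ne.symm hsm)] using h0 m
  intro i
  rcases eq_or_ne i s with rfl | hi
  · have hs := h0 i
    rw [hg', Function.update_self] at hs
    linarith
  · simpa [g', Function.update_of_ne hi] using h0 i

/-- `y` is obtained from `x` by one step of Brun's unordered algorithm: the second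
largest coordinate is subtracted from the largest one (smallest indices among ties). -/
def IsBrunStep {r : ℕ} (x y : Fin r → ℝ) : Prop :=
  ∃ m s : Fin r, s ≠ m ∧ (∀ j, x j ≤ x m) ∧ (∀ i, (∀ j, x j ≤ x i) → m ≤ i) ∧
    (∀ j, j ≠ m → x j ≤ x s) ∧ (∀ i, i ≠ m → (∀ j, j ≠ m → x j ≤ x i) → s ≤ i) ∧
    y = Function.update x m (x m - x s)

/-- Along the Brun orbit of a rationally independent positive vector, every index `i`
occurs as the index of the largest coordinate infinitely often. -/
theorem stmt4 (r : ℕ) (hr : 2 ≤ r) (x : Fin r → ℝ) (hx : ∀ i, 0 < x i)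
    (hind : LinearIndependent ℚ x)
    (v : ℕ → Fin r → ℝ) (hv0 : v 0 = x)
    (hstep : ∀ s, IsBrunStep (v s) (v (s + 1))) :
    ∀ (i : Fin r) (h : ℕ), ∃ m : ℕ, h < m ∧ ∀ j, v m j ≤ v m i := by
  choose M S hSM hmax hmaxmin hsec hsecmin hupd using hstep
  have inv : ∀ s, (∀ j, 0 < v s j) ∧ LinearIndependent ℚ (v s) := by
    intro s
    induction s with
    | zero => exact ⟨by simpa [hv0] using hx, by simpa [hv0] using hind⟩
    | succ n ih =>
      obtain ⟨hp, hli⟩ := ih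
      have hne : v n (S n) ≠ v n (M n) := fun hh => hSM n (hli.injective hh)
      have hlt : v n (S n) < v n (M n) := lt_of_le_of_ne (hmax n (S n)) hne
      refine ⟨?_, ?_⟩
      · intro j
        rw [hupd n]
        rcases eq_or_ne j (M n) with rfl | hj
        · simpa using sub_pos.mpr hlt
        · simpa [Function.update_of_ne hj] using hp j
      · rw [hupd n]; exact brun_indep hli (hSM n)
  intro i h
  by_contra hcon
  push_neg at hcon
  have hiM : ∀ m, h < m → i ≠ M m := by
    intro m hm hi
    obtain ⟨j, hj⟩ := hcon m hm
    have := hmax m j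
    rw [← hi] at this
    linarith
  have hconst : ∀ N, v (h + 1 + N) i = v (h + 1) i := by
    intro N
    induction N with
    | zero => rfl
    | succ n ihn =>
      have hne : i ≠ M (h + 1 + n) := hiM _ (by omega)
      have he : v (h + 1 + n + 1) i = v (h + 1 + n) i := by
        rw [hupd]; exact Function.update_of_ne hne _ _
      rw [show h + 1 + (n + 1) = h + 1 + n + 1 from rfl, he, ihn]
  set c := v (h + 1) i with hcdef
  have hc : 0 < c := (inv (h + 1)).1 i
  set W : ℕ → ℝ := fun m => ∑ j, v m j with hW
  have hWstep : ∀ m, W (m + 1) = W m - v m (S m) := by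
    intro m
    have : W (m + 1) = ∑ j, Function.update (v m) (M m) (v m (M m) - v m (S m)) j := by
      simp only [hW]; rw [hupd m]
    rw [this, Finset.sum_update_of_mem (Finset.mem_univ (M m)),
      show W m = ∑ j, v m j from rfl,
      Finset.sum_eq_sum_sdiff_singleton_add (Finset.mem_univ (M m)) (v m)]
    ring
  have hdec : ∀ N, W (h + 1 + N + 1) ≤ W (h + 1 + N) - c := by
    intro N
    have hne : i ≠ M (h + 1 + N) := hiM _ (by omega)
    have h1 : c ≤ v (h + 1 + N) (S (h + 1 + N)) := by
      have := hsec (h + 1 + N) i hne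
      rw [hconst N] at this
      exact this
    rw [hWstep]
    linarith
  have hbound : ∀ N : ℕ, W (h + 1 + N) ≤ W (h + 1) - N * c := by
    intro N
    induction N with
    | zero => simp
    | succ n ihn =>
      have := hdec n
      have hcast : ((n : ℝ) + 1) * c = n * c + c := by ring
      rw [show h + 1 + (n + 1) = h + 1 + n + 1 from rfl]
      push_cast
      rw [hcast]
      linarith
  have hWpos : ∀ m, 0 < W m := by
    intro m
    exact Finset.sum_pos (fun j _ => (inv m).1 j) ⟨⟨0, by omega⟩, Finset.mem_univ _⟩
  obtain ⟨N, hN⟩ := exists_nat_gt (W (h + 1) / c)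
  have hN' : W (h + 1) < N * c := (div_lt_iff₀ hc).mp hN
  have := hbound N
  have := hWpos (h + 1 + N)
  linarith
end

section
/- Let x ∈ R^r_+ have rationally independent coordinates, and let A_n^x = M_1 M_2 ⋯ M_n be the product of the unfolding matrices determined by the first n steps of Brun's unordered algorithm applied to x (where the s-th step subtracting coordinate j from coordinate i contributes the matrix M_{i,j} equal to the identity with an extra 1 in position (i,j)). Then there exists N ∈ N such that A_n^x has all entries strictly positive for every n > N. -/
/-- `y` is obtained from `x` by the Brun step subtracting coordinate `s` (the second
largest) from coordinate `m` (the largest), with ties broken by smallest index. -/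
def IsBrunStepAt {r : ℕ} (x y : Fin r → ℝ) (m s : Fin r) : Prop :=
  s ≠ m ∧ (∀ j, x j ≤ x m) ∧ (∀ i, (∀ j, x j ≤ x i) → m ≤ i) ∧
    (∀ j, j ≠ m → x j ≤ x s) ∧ (∀ i, i ≠ m → (∀ j, j ≠ m → x j ≤ x i) → s ≤ i) ∧
    y = Function.update x m (x m - x s)

/-- The unfolding matrix `M i j`: identity with an extra `1` in position `(i,j)`. -/
def brunUnfold {r : ℕ} (i j : Fin r) : Matrix (Fin r) (Fin r) ℝ :=
  1 + Matrix.single i j 1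

section Aux

variable {r : ℕ}

/-- The product of the first `n` unfolding matrices. -/
noncomputable def brunProd (p : ℕ → Fin r × Fin r) (n : ℕ) : Matrix (Fin r) (Fin r) ℝ :=
  ((List.range n).map (fun s => brunUnfold (p s).1 (p s).2)).prod

lemma brunProd_zero (p : ℕ → Fin r × Fin r) : brunProd p 0 = 1 := by
  simp [brunProd]

lemma brunProd_succ (p : ℕ → Fin r × Fin r) (n : ℕ) :
    brunProd p (n + 1) = brunProd p n * brunUnfold (p n).1 (p n).2 := by
  simp [brunProd, List.range_succ]

lemma mul_brunUnfold_apply (M : Matrix (Fin r) (Fin r) ℝ) (i j k l : Fin r) :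
    (M * brunUnfold i j) k l = M k l + if l = j then M k i else 0 := by
  unfold brunUnfold
  rw [Matrix.mul_add, Matrix.mul_one, Matrix.add_apply]
  congr 1
  by_cases h : l = j
  · subst h
    rw [Matrix.mul_single_apply_same, mul_one, if_pos rfl]
  · rw [Matrix.mul_single_apply_of_ne 1 i j k l h, if_neg h]

lemma brunProd_nonneg (p : ℕ → Fin r × Fin r) (n : ℕ) (k l : Fin r) :
    0 ≤ brunProd p n k l := by
  induction n generalizing l with
  | zero =>
    rw [brunProd_zero, Matrix.one_apply]
    split <;> norm_num
  | succ n ih =>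
    rw [brunProd_succ, mul_brunUnfold_apply]
    have h1 := ih l
    have h2 : (0:ℝ) ≤ if l = (p n).2 then brunProd p n k (p n).1 else 0 := by
      split
      · exact ih _
      · exact le_refl _
    linarith

lemma brunProd_mono (p : ℕ → Fin r × Fin r) {n n' : ℕ} (h : n ≤ n') (k l : Fin r) :
    brunProd p n k l ≤ brunProd p n' k l := by
  induction n' with
  | zero => simp_all
  | succ n' ih =>
    rcases Nat.lt_or_ge n (n' + 1) with h' | h'
    · have h2 := ih (Nat.lt_succ_iff.mp h')
      rw [brunProd_succ, mul_brunUnfold_apply]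
      have h3 : (0:ℝ) ≤ if l = (p n').2 then brunProd p n' k (p n').1 else 0 := by
        split
        · exact brunProd_nonneg p n' k _
        · exact le_refl _
      linarith
    · have : n = n' + 1 := le_antisymm h h'
      subst this; exact le_refl _

lemma brunProd_diag_pos (p : ℕ → Fin r × Fin r) (n : ℕ) (k : Fin r) :
    0 < brunProd p n k k := by
  have h0 : 0 < brunProd p 0 k k := by
    rw [brunProd_zero, Matrix.one_apply_eq]; norm_num
  exact lt_of_lt_of_le h0 (brunProd_mono p (Nat.zero_le n) k k)

lemma brunProd_prop (p : ℕ → Fin r × Fin r) (n : ℕ) (k : Fin r)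
    (h : 0 < brunProd p n k (p n).1) : 0 < brunProd p (n + 1) k (p n).2 := by
  rw [brunProd_succ, mul_brunUnfold_apply, if_pos rfl]
  have := brunProd_nonneg p n k (p n).2
  linarith

end Aux

section Dyn

variable {r : ℕ}

lemma indep_update {f : Fin r → ℝ} (hf : LinearIndependent ℚ f) {m s : Fin r}
    (hms : s ≠ m) : LinearIndependent ℚ (Function.update f m (f m - f s)) := by
  classical
  rw [Fintype.linearIndependent_iff] at hf ⊢
  intro g hg
  set d : Fin r → ℚ := fun i => if i = s then g s - g m else g i with hd
  have key : ∑ i, d i • f i = 0 := by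
    have e1 : ∀ i, g i • Function.update f m (f m - f s) i
        = Function.update (fun i => g i • f i) m (g m • f m - g m • f s) i := by
      intro i
      by_cases h : i = m
      · subst h; simp [smul_sub]
      · simp [Function.update_of_ne h]
    have e2 : ∀ i, d i • f i
        = Function.update (fun i => g i • f i) s ((g s • f s) - g m • f s) i := by
      intro i
      by_cases h : i = s
      · subst h; simp [hd, sub_smul]
      · simp [hd, Function.update_of_ne h, if_neg h]
    rw [Finset.sum_congr rfl (fun i _ => e1 i)] at hg
    rw [Finset.sum_congr rfl (fun i _ => e2 i)]
    rw [Finset.sum_update_of_mem (Finset.mem_univ m)] at hg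
    rw [Finset.sum_update_of_mem (Finset.mem_univ s)]
    have h3 : ∑ i ∈ Finset.univ \ {m}, g i • f i
        = (∑ i, g i • f i) - g m • f m := by
      rw [eq_sub_iff_add_eq, ← Finset.sum_erase_add _ _ (Finset.mem_univ m),
        Finset.erase_eq]
    have h4 : ∑ i ∈ Finset.univ \ {s}, g i • f i
        = (∑ i, g i • f i) - g s • f s := by
      rw [eq_sub_iff_add_eq, ← Finset.sum_erase_add _ _ (Finset.mem_univ s),
        Finset.erase_eq]
    rw [h3] at hg
    rw [h4]
    linear_combination hg
  have hall := hf d key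
  intro i
  have hm0 : g m = 0 := by
    have := hall m
    rw [hd] at this
    simpa [if_neg (fun h : m = s => hms h.symm)] using this
  by_cases h : i = s
  · have := hall s
    rw [hd] at this
    simp only [if_pos rfl, hm0, sub_zero] at this
    rw [h]
    exact this
  · have := hall i
    rw [hd] at this
    simpa [if_neg h] using this

variable {v : ℕ → Fin r → ℝ} {p : ℕ → Fin r × Fin r} {x : Fin r → ℝ}

lemma posIndep (hx : ∀ i, 0 < x i) (hind : LinearIndependent ℚ x) (hv0 : v 0 = x)
    (hstep : ∀ s, IsBrunStepAt (v s) (v (s + 1)) (p s).1 (p s).2) :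
    ∀ n, (∀ i, 0 < v n i) ∧ LinearIndependent ℚ (v n) := by
  intro n
  induction n with
  | zero => rw [hv0]; exact ⟨hx, hind⟩
  | succ n ih =>
    obtain ⟨hpos, hli⟩ := ih
    obtain ⟨hne, hmax, -, hsec, -, heq⟩ := hstep n
    have hlt : v n (p n).2 < v n (p n).1 :=
      lt_of_le_of_ne (hmax (p n).2) (fun h => hne (hli.injective h))
    constructor
    · intro i
      rw [heq, Function.update_apply]
      split
      · linarith
      · exact hpos i
    · rw [heq]; exact indep_update hli hne

lemma sum_step (hstep : ∀ s, IsBrunStepAt (v s) (v (s + 1)) (p s).1 (p s).2) (n : ℕ) :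
    ∑ j, v (n + 1) j = ∑ j, v n j - v n (p n).2 := by
  classical
  obtain ⟨hne, hmax, -, hsec, -, heq⟩ := hstep n
  rw [heq, Finset.sum_update_of_mem (Finset.mem_univ (p n).1)]
  have h3 : ∑ i ∈ Finset.univ \ {(p n).1}, v n i
      = (∑ i, v n i) - v n (p n).1 := by
    rw [eq_sub_iff_add_eq, ← Finset.sum_erase_add _ _ (Finset.mem_univ (p n).1),
      Finset.erase_eq]
  rw [h3]; ring

lemma max_io (hx : ∀ i, 0 < x i) (hind : LinearIndependent ℚ x) (hv0 : v 0 = x)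
    (hstep : ∀ s, IsBrunStepAt (v s) (v (s + 1)) (p s).1 (p s).2)
    (i : Fin r) (N : ℕ) : ∃ n, N ≤ n ∧ (p n).1 = i := by
  by_contra hcon
  push_neg at hcon
  have hconst : ∀ d, v (N + d) i = v N i := by
    intro d
    induction d with
    | zero => rfl
    | succ d ih =>
      obtain ⟨-, -, -, -, -, heq⟩ := hstep (N + d)
      rw [show N + (d+1) = (N+d) + 1 by ring, heq,
        Function.update_of_ne (fun h => hcon (N+d) (Nat.le_add_right N d) h.symm), ih]
  have hc : 0 < v N i := (posIndep hx hind hv0 hstep N).1 i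
  have hw : ∀ d, v N i ≤ v (N + d) (p (N + d)).2 := by
    intro d
    obtain ⟨-, -, -, hsec, -, -⟩ := hstep (N + d)
    have h := hsec i (fun h => hcon (N+d) (Nat.le_add_right N d) h.symm)
    rw [hconst d] at h
    exact h
  have hsum : ∀ d, ∑ j, v (N + d) j ≤ ∑ j, v N j - d * v N i := by
    intro d
    induction d with
    | zero => simp
    | succ d ih =>
      have h1 := sum_step hstep (N + d)
      have h2 := hw d
      rw [show N + (d+1) = (N+d) + 1 by ring, h1]
      push_cast
      push_cast at ih
      linarith
  obtain ⟨d, hd⟩ := exists_nat_gt ((∑ j, v N j) / v N i)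
  have hpos : 0 < ∑ j, v (N + d) j :=
    Finset.sum_pos (fun j _ => (posIndep hx hind hv0 hstep (N+d)).1 j) ⟨i, Finset.mem_univ i⟩
  have := hsum d
  rw [div_lt_iff₀ hc] at hd
  linarith

lemma m_moves (hx : ∀ i, 0 < x i) (hind : LinearIndependent ℚ x) (hv0 : v 0 = x)
    (hstep : ∀ s, IsBrunStepAt (v s) (v (s + 1)) (p s).1 (p s).2) (n : ℕ) :
    (p (n + 1)).1 = (p n).1 ∨ (p (n + 1)).1 = (p n).2 := by
  by_contra h
  push_neg at h
  obtain ⟨h1, h2⟩ := h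
  obtain ⟨hne, hmax, -, hsec, -, heq⟩ := hstep n
  obtain ⟨-, hmax', -, -, -, -⟩ := hstep (n + 1)
  have e1 : v (n + 1) (p (n+1)).1 = v n (p (n+1)).1 := by
    rw [heq, Function.update_of_ne h1]
  have e2 : v (n + 1) (p n).2 = v n (p n).2 := by
    rw [heq, Function.update_of_ne hne]
  have le1 : v n (p n).2 ≤ v n (p (n+1)).1 := by
    have := hmax' (p n).2
    rw [e1, e2] at this
    exact this
  have le2 : v n (p (n+1)).1 ≤ v n (p n).2 := hsec _ h1
  have heq2 : v n (p (n+1)).1 = v n (p n).2 := le_antisymm le2 le1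
  exact h2 ((posIndep hx hind hv0 hstep n).2.injective heq2)

end Dyn
/-- The products `A n = M_{i₁ j₁} ⋯ M_{iₙ jₙ}` of the unfolding matrices along the Brun
orbit of a rationally independent positive vector are eventually strictly positive. -/
theorem stmt5 (r : ℕ) (hr : 2 ≤ r) (x : Fin r → ℝ) (hx : ∀ i, 0 < x i)
    (hind : LinearIndependent ℚ x)
    (v : ℕ → Fin r → ℝ) (hv0 : v 0 = x)
    (p : ℕ → Fin r × Fin r)
    (hstep : ∀ s, IsBrunStepAt (v s) (v (s + 1)) (p s).1 (p s).2) :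
    ∃ N : ℕ, ∀ n, N < n → ∀ k l,
      0 < (((List.range n).map (fun s => brunUnfold (p s).1 (p s).2)).prod) k l := by
  classical
  have key : ∀ k l : Fin r, ∃ n, 0 < brunProd p n k l := by
    intro k l
    by_contra hcon
    push_neg at hcon
    set S : Set (Fin r) := {i | ∃ n, 0 < brunProd p n k i} with hS
    have hkS : k ∈ S := ⟨0, brunProd_diag_pos p 0 k⟩
    have hlS : l ∉ S := by
      rintro ⟨n, hn⟩
      exact absurd hn (not_lt.mpr (hcon n))
    set N : ℕ := Finset.univ.sup (fun i : Fin r => if h : i ∈ S then h.choose else 0)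
      with hN
    have hNS : ∀ i ∈ S, 0 < brunProd p N k i := by
      intro i hi
      have h1 : 0 < brunProd p hi.choose k i := hi.choose_spec
      have h2 : (if h : i ∈ S then h.choose else 0) ≤ N :=
        Finset.le_sup (f := fun i : Fin r => if h : i ∈ S then h.choose else 0)
          (Finset.mem_univ i)
      rw [dif_pos hi] at h2
      exact lt_of_lt_of_le h1 (brunProd_mono p h2 k i)
    have closed : ∀ n, N ≤ n → (p n).1 ∈ S → (p n).2 ∈ S := by
      intro n hn h1
      exact ⟨n + 1, brunProd_prop p n k
        (lt_of_lt_of_le (hNS _ h1) (brunProd_mono p hn k (p n).1))⟩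
    obtain ⟨n₁, hn₁, hk⟩ := max_io hx hind hv0 hstep k N
    have hmS : ∀ d, (p (n₁ + d)).1 ∈ S := by
      intro d
      induction d with
      | zero => rw [Nat.add_zero, hk]; exact hkS
      | succ d ih =>
        rw [show n₁ + (d + 1) = (n₁ + d) + 1 by ring]
        rcases m_moves hx hind hv0 hstep (n₁ + d) with h | h
        · rw [h]; exact ih
        · rw [h]; exact closed _ (le_trans hn₁ (Nat.le_add_right n₁ d)) ih
    obtain ⟨n₂, hn₂, hl⟩ := max_io hx hind hv0 hstep l n₁
    apply hlS
    rw [← hl, show n₂ = n₁ + (n₂ - n₁) by omega]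
    exact hmS (n₂ - n₁)
  choose f hf using key
  refine ⟨Finset.univ.sup (fun q : Fin r × Fin r => f q.1 q.2), fun n hn k l => ?_⟩
  show 0 < brunProd p n k l
  have h1 : f k l ≤ n :=
    le_of_lt (lt_of_le_of_lt (Finset.le_sup (f := fun q : Fin r × Fin r => f q.1 q.2) (Finset.mem_univ (k, l))) hn)
  exact lt_of_lt_of_le (hf k l) (brunProd_mono p h1 k l)
end

section
/- Let A be an r×r matrix with all entries strictly positive, with Perron-Frobenius eigenvector v (normalized in the simplex). Then for every ε > 0 there exists K such that for all k > K, the image of the open positive cone under A^k, projected to the standard simplex by normalizing coordinate sums to 1, is contained in the ε-ball around v. -/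
/-- A strictly positive matrix `A` with Perron-Frobenius eigenvector `v` in the simplex
contracts the open positive cone to `v`: for every `ε > 0`, for all sufficiently large
`k`, the normalized image of every positive vector under `A ^ k` is `ε`-close to `v`. -/
theorem stmt9 (r : ℕ) (hr : 2 ≤ r) (A : Matrix (Fin r) (Fin r) ℝ)
    (hA : ∀ k l, 0 < A k l) (v : Fin r → ℝ) (hv : ∀ i, 0 < v i)
    (hsum : ∑ i, v i = 1) (lam : ℝ) (hlam : 0 < lam)
    (heig : A.mulVec v = lam • v) :
    ∀ ε > (0 : ℝ), ∃ K : ℕ, ∀ k, K < k → ∀ u : Fin r → ℝ, (∀ i, 0 < u i) →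
      dist ((∑ i, (A ^ k).mulVec u i)⁻¹ • (A ^ k).mulVec u) v < ε := by
  have hr0 : 0 < r := by omega
  haveI : NeZero r := ⟨by omega⟩
  have hne : (Finset.univ : Finset (Fin r)).Nonempty := Finset.univ_nonempty
  have hlam' : lam ≠ 0 := ne_of_gt hlam
  have hv' : ∀ i, v i ≠ 0 := fun i => ne_of_gt (hv i)
  -- the conjugated row-stochastic matrix
  set P : Matrix (Fin r) (Fin r) ℝ := fun i j => A i j * v j / (lam * v i) with hPdef
  have hPpos : ∀ i j, 0 < P i j := fun i j =>
    div_pos (mul_pos (hA i j) (hv j)) (mul_pos hlam (hv i))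
  have hProw : ∀ i, ∑ j, P i j = 1 := by
    intro i
    have h1 : ∑ j, A i j * v j = lam * v i := by
      have := congrFun heig i
      simpa [Matrix.mulVec, dotProduct] using this
    calc ∑ j, P i j = (∑ j, A i j * v j) / (lam * v i) := by
          rw [← Finset.sum_div]
      _ = 1 := by rw [h1, div_self (mul_ne_zero hlam' (hv' i))]
  -- the contraction constant θ
  set θ : ℝ := Finset.univ.inf' hne (fun i => Finset.univ.inf' hne (fun j => P i j)) with hθdef
  have hθle : ∀ i j, θ ≤ P i j := by
    intro i j
    exact le_trans (Finset.inf'_le _ (Finset.mem_univ i))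
      (Finset.inf'_le _ (Finset.mem_univ j))
  have hθpos : 0 < θ := by
    rw [hθdef, Finset.lt_inf'_iff]
    intro i _
    rw [Finset.lt_inf'_iff]
    intro j _
    exact hPpos i j
  have hθhalf : 2 * θ ≤ 1 := by
    have i0 : Fin r := ⟨0, hr0⟩
    have h1 : (r : ℝ) * θ ≤ ∑ j, P i0 j := by
      have := Finset.sum_le_sum (fun j (_ : j ∈ Finset.univ) => hθle i0 j)
      simpa [Finset.sum_const, Finset.card_univ, nsmul_eq_mul] using this
    have h2 : (2 : ℝ) ≤ (r : ℝ) := by exact_mod_cast hr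
    have := hProw i0
    nlinarith
  set δ : ℝ := 1 - 2 * θ with hδdef
  have hδ0 : 0 ≤ δ := by linarith
  have hδ1 : δ < 1 := by linarith
  -- one-step estimates for the stochastic matrix
  have key : ∀ x : Fin r → ℝ, ∀ i,
      Finset.univ.inf' hne x + θ * (Finset.univ.sup' hne x - Finset.univ.inf' hne x)
        ≤ ∑ j, P i j * x j ∧
      ∑ j, P i j * x j
        ≤ Finset.univ.sup' hne x - θ * (Finset.univ.sup' hne x - Finset.univ.inf' hne x) := by
    intro x i
    set ml : ℝ := Finset.univ.inf' hne x with hml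
    set Ml : ℝ := Finset.univ.sup' hne x with hMl
    have i0 : Fin r := ⟨0, hr0⟩
    have hmlM : ml ≤ Ml := le_trans (Finset.inf'_le x (Finset.mem_univ i0))
      (Finset.le_sup' x (Finset.mem_univ i0))
    have hinfle : ∀ j, ml ≤ x j := fun j => Finset.inf'_le _ (Finset.mem_univ j)
    have hlesup : ∀ j, x j ≤ Ml := fun j => Finset.le_sup' _ (Finset.mem_univ j)
    obtain ⟨j₀, -, hj₀⟩ := Finset.exists_mem_eq_sup' hne x
    obtain ⟨j₁, -, hj₁⟩ := Finset.exists_mem_eq_inf' hne x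
    constructor
    · have expand : ∑ j, P i j * (x j - ml) = (∑ j, P i j * x j) - ml := by
        simp [mul_sub, Finset.sum_sub_distrib, ← Finset.sum_mul, hProw i]
      have h1 : P i j₀ * (x j₀ - ml) ≤ ∑ j, P i j * (x j - ml) := by
        apply Finset.single_le_sum (f := fun j => P i j * (x j - ml))
        · intro j _
          exact mul_nonneg (le_of_lt (hPpos i j)) (by linarith [hinfle j])
        · exact Finset.mem_univ j₀
      have h2 : θ * (Ml - ml) ≤ P i j₀ * (x j₀ - ml) := by
        rw [← hj₀]
        exact mul_le_mul (hθle i j₀) le_rfl (by linarith) (le_of_lt (hPpos i j₀))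
      linarith
    · have expand : ∑ j, P i j * (Ml - x j) = Ml - ∑ j, P i j * x j := by
        simp [mul_sub, Finset.sum_sub_distrib, ← Finset.sum_mul, hProw i]
      have h1 : P i j₁ * (Ml - x j₁) ≤ ∑ j, P i j * (Ml - x j) := by
        apply Finset.single_le_sum (f := fun j => P i j * (Ml - x j))
        · intro j _
          exact mul_nonneg (le_of_lt (hPpos i j)) (by linarith [hlesup j])
        · exact Finset.mem_univ j₁
      have h2 : θ * (Ml - ml) ≤ P i j₁ * (Ml - x j₁) := by
        rw [← hj₁]
        exact mul_le_mul (hθle i j₁) le_rfl (by linarith) (le_of_lt (hPpos i j₁))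
      linarith
  -- choose K
  intro ε hε
  obtain ⟨N, hN⟩ := exists_pow_lt_of_lt_one (mul_pos hθpos hε) hδ1
  refine ⟨N + 1, ?_⟩
  intro k hk u hu
  obtain ⟨n, rfl⟩ : ∃ n, k = n + 1 := ⟨k - 1, by omega⟩
  have hnN : N ≤ n := by omega
  -- the ratio sequence
  set x : ℕ → Fin r → ℝ := fun n i => (A ^ n).mulVec u i / (lam ^ n * v i) with hxdef
  have hx0 : ∀ i, 0 < x 0 i := by
    intro i
    simp only [hxdef, pow_zero, Matrix.one_mulVec, one_mul]
    exact div_pos (hu i) (hv i)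
  have hmulvec : ∀ m i, (A ^ m).mulVec u i = lam ^ m * v i * x m i := by
    intro m i
    have hc : lam ^ m * v i ≠ 0 := mul_ne_zero (pow_ne_zero _ hlam') (hv' i)
    simp only [hxdef]
    rw [mul_comm (lam ^ m * v i), div_mul_cancel₀ _ hc]
  have hxrec : ∀ m i, x (m + 1) i = ∑ j, P i j * x m j := by
    intro m i
    have h1 : (A ^ (m + 1)).mulVec u i = ∑ j, A i j * (A ^ m).mulVec u j := by
      rw [pow_succ']
      rw [← Matrix.mulVec_mulVec]
      simp [Matrix.mulVec, dotProduct]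
    have h2 : ∀ (j : Fin r) (y : ℝ),
        A i j * (lam ^ m * v j * y) = (P i j * y) * (lam ^ (m + 1) * v i) := by
      intro j y
      rw [hPdef]
      field_simp [hv' i, hv' j, hlam']
      ring
    have hc : lam ^ (m + 1) * v i ≠ 0 := mul_ne_zero (pow_ne_zero _ hlam') (hv' i)
    calc x (m + 1) i = (∑ j, A i j * (A ^ m).mulVec u j) / (lam ^ (m + 1) * v i) := by
          simp only [hxdef]
          rw [h1]
      _ = (∑ j, (P i j * x m j) * (lam ^ (m + 1) * v i)) / (lam ^ (m + 1) * v i) := by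
          congr 1
          apply Finset.sum_congr rfl
          intro j _
          rw [hmulvec m j, h2 j (x m j)]
      _ = ∑ j, P i j * x m j := by
          rw [← Finset.sum_mul, mul_div_assoc, div_self hc, mul_one]
  set m : ℕ → ℝ := fun n => Finset.univ.inf' hne (x n) with hmdef
  set M : ℕ → ℝ := fun n => Finset.univ.sup' hne (x n) with hMdef
  have hmx : ∀ n i, m n ≤ x n i := fun n i => Finset.inf'_le _ (Finset.mem_univ i)
  have hxM : ∀ n i, x n i ≤ M n := fun n i => Finset.le_sup' _ (Finset.mem_univ i)
  have hmM : ∀ n, m n ≤ M n := fun n => le_trans (hmx n ⟨0, hr0⟩) (hxM n ⟨0, hr0⟩)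
  have hstep_lo : ∀ n, m n + θ * (M n - m n) ≤ m (n + 1) := by
    intro n
    apply Finset.le_inf'
    intro i _
    rw [hxrec n i]
    exact (key (x n) i).1
  have hstep_hi : ∀ n, M (n + 1) ≤ M n - θ * (M n - m n) := by
    intro n
    apply Finset.sup'_le
    intro i _
    rw [hxrec n i]
    exact (key (x n) i).2
  have hm_mono : ∀ a b, a ≤ b → m a ≤ m b := by
    intro a b hab
    induction b with
    | zero => exact le_of_eq (by rw [Nat.le_zero.mp hab])
    | succ b ih =>
      rcases Nat.lt_or_ge a (b + 1) with h | h
      · have h1 := ih (by omega)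
        have h2 := hstep_lo b
        have h3 := hmM b
        nlinarith [hθpos.le]
      · have : a = b + 1 := by omega
        rw [this]
  have hM_anti : ∀ n, M (n + 1) ≤ M n := by
    intro n
    have h2 := hstep_hi n
    have h3 := hmM n
    nlinarith [hθpos.le]
  have hm0 : 0 < m 0 := by
    rw [hmdef]
    rw [Finset.lt_inf'_iff]
    intro i _
    exact hx0 i
  have hmpos : ∀ n, 0 < m n := fun n => lt_of_lt_of_le hm0 (hm_mono 0 n (Nat.zero_le n))
  have hosc : ∀ a, M (a + 1) - m (a + 1) ≤ δ * (M a - m a) := by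
    intro a
    have h1 := hstep_lo a
    have h2 := hstep_hi a
    rw [hδdef]
    nlinarith
  have hosc_pow : ∀ a, M (a + 1) - m (a + 1) ≤ δ ^ a * (M 1 - m 1) := by
    intro a
    induction a with
    | zero => simp
    | succ a ih =>
      calc M (a + 2) - m (a + 2) ≤ δ * (M (a + 1) - m (a + 1)) := hosc (a + 1)
        _ ≤ δ * (δ ^ a * (M 1 - m 1)) := by
            exact mul_le_mul_of_nonneg_left ih hδ0
        _ = δ ^ (a + 1) * (M 1 - m 1) := by ring
  have hm1 : θ * M 1 ≤ m 1 := by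
    have h1 := hstep_lo 0
    have h2 := hstep_hi 0
    have h3 := hmM 0
    have h4 : θ ≤ 1 := by linarith
    nlinarith [hm0, hM_anti 0, hθpos.le]
  -- key uniform oscillation bound at time n+1
  have hoscfin : M (n + 1) - m (n + 1) ≤ δ ^ n * (m (n + 1) / θ) := by
    have h1 : M 1 - m 1 ≤ m 1 / θ := by
      have : θ * (M 1 - m 1) ≤ θ * M 1 := by nlinarith [hmM 1, hmpos 1, hθpos]
      rw [le_div_iff₀ hθpos]
      nlinarith [hm1]
    calc M (n + 1) - m (n + 1) ≤ δ ^ n * (M 1 - m 1) := hosc_pow n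
      _ ≤ δ ^ n * (m 1 / θ) := by
          exact mul_le_mul_of_nonneg_left h1 (pow_nonneg hδ0 n)
      _ ≤ δ ^ n * (m (n + 1) / θ) := by
          apply mul_le_mul_of_nonneg_left _ (pow_nonneg hδ0 n)
          exact (div_le_div_iff_of_pos_right hθpos).mpr (hm_mono 1 (n + 1) (by omega))
  -- δ ^ n is small
  have hδsmall : δ ^ n < θ * ε := lt_of_le_of_lt
    (pow_le_pow_of_le_one hδ0 (le_of_lt hδ1) hnN) hN
  -- the sum of the image vector
  set t : ℝ := ∑ j, v j * x (n + 1) j with htdef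
  have htlo : m (n + 1) ≤ t := by
    have : ∑ j, v j * m (n + 1) ≤ t := by
      apply Finset.sum_le_sum
      intro j _
      exact mul_le_mul_of_nonneg_left (hmx (n + 1) j) (le_of_lt (hv j))
    rwa [← Finset.sum_mul, hsum, one_mul] at this
  have hthi : t ≤ M (n + 1) := by
    have : t ≤ ∑ j, v j * M (n + 1) := by
      apply Finset.sum_le_sum
      intro j _
      exact mul_le_mul_of_nonneg_left (hxM (n + 1) j) (le_of_lt (hv j))
    rwa [← Finset.sum_mul, hsum, one_mul] at this
  have htpos : 0 < t := lt_of_lt_of_le (hmpos (n + 1)) htlo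
  have hs : (∑ i, (A ^ (n + 1)).mulVec u i) = lam ^ (n + 1) * t := by
    rw [htdef, Finset.mul_sum]
    apply Finset.sum_congr rfl
    intro i _
    rw [hmulvec (n + 1) i]
    ring
  have hspos : 0 < lam ^ (n + 1) * t := mul_pos (pow_pos hlam _) htpos
  rw [dist_pi_lt_iff hε]
  intro i
  rw [Real.dist_eq]
  have hq : ((∑ i, (A ^ (n + 1)).mulVec u i)⁻¹ • (A ^ (n + 1)).mulVec u) i
      = v i * x (n + 1) i / t := by
    simp only [Pi.smul_apply, smul_eq_mul, hs, hmulvec (n + 1) i]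
    rw [mul_inv]
    field_simp
  rw [hq]
  have hvi1 : v i ≤ 1 := by
    rw [← hsum]
    exact Finset.single_le_sum (fun j _ => le_of_lt (hv j)) (Finset.mem_univ i)
  have habs : |v i * x (n + 1) i / t - v i| ≤ (M (n + 1) - m (n + 1)) / m (n + 1) := by
    have heq : v i * x (n + 1) i / t - v i = v i * (x (n + 1) i - t) / t := by
      field_simp
    rw [heq, abs_div, abs_mul, abs_of_pos htpos]
    have h1 : |x (n + 1) i - t| ≤ M (n + 1) - m (n + 1) := by
      rw [abs_le]
      constructor
      · have := hmx (n + 1) i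
        linarith
      · have := hxM (n + 1) i
        linarith
    have h2 : |v i| ≤ 1 := by rw [abs_of_pos (hv i)]; exact hvi1
    have h3 : |v i| * |x (n + 1) i - t| ≤ M (n + 1) - m (n + 1) := by
      calc |v i| * |x (n + 1) i - t| ≤ 1 * (M (n + 1) - m (n + 1)) :=
            mul_le_mul h2 h1 (abs_nonneg _) one_pos.le
        _ = M (n + 1) - m (n + 1) := one_mul _
    calc |v i| * |x (n + 1) i - t| / t ≤ (M (n + 1) - m (n + 1)) / t := by
          exact div_le_div_of_nonneg_right h3 htpos.le
      _ ≤ (M (n + 1) - m (n + 1)) / m (n + 1) := by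
          exact div_le_div_of_nonneg_left (by linarith [hmM (n + 1)]) (hmpos (n + 1)) htlo
  have hfin : (M (n + 1) - m (n + 1)) / m (n + 1) < ε := by
    rw [div_lt_iff₀ (hmpos (n + 1))]
    have h1 : δ ^ n * (m (n + 1) / θ) < (θ * ε) * (m (n + 1) / θ) := by
      apply mul_lt_mul_of_pos_right hδsmall
      exact div_pos (hmpos (n + 1)) hθpos
    have h2 : (θ * ε) * (m (n + 1) / θ) = ε * m (n + 1) := by
      field_simp
    calc M (n + 1) - m (n + 1) ≤ δ ^ n * (m (n + 1) / θ) := hoscfin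
      _ < (θ * ε) * (m (n + 1) / θ) := h1
      _ = ε * m (n + 1) := h2
  exact lt_of_le_of_lt habs hfin
end

section
/- If G is a finite connected trivalent graph with no separating edges, v_0 a vertex of G, and E, E', E'' the three edges incident at v_0, then G − {v_0} is connected (i.e., removing the vertex v_0 does not disconnect G). -/
open SimpleGraph

lemma aux_reach {V : Type} {G G' : SimpleGraph V} (hle : G' ≤ G) (v0 : V) :
    ∀ {u w : V} (p : G'.Walk u w) (hu : u ≠ v0) (hw : w ≠ v0),
      v0 ∉ p.support →
      (G.induce {v : V | v ≠ v0}).Reachable ⟨u, hu⟩ ⟨w, hw⟩ := by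
  intro u w p
  induction p with
  | nil => intro hu hw _; exact Reachable.refl _
  | @cons u x w h q ih =>
    intro hu hw hs
    rw [Walk.support_cons, List.mem_cons] at hs
    push_neg at hs
    have hx : x ≠ v0 := fun he => hs.2 (he ▸ q.start_mem_support)
    have hadj : (G.induce {v : V | v ≠ v0}).Adj ⟨u, hu⟩ ⟨x, hx⟩ := by
      simp only [comap_adj, Function.Embedding.coe_subtype]
      exact hle h
    exact hadj.reachable.trans (ih hx hw hs.2)

lemma aux_extract {V : Type} [DecidableEq V] {G : SimpleGraph V} {u v0 : V}
    (hne : v0 ≠ u) (h : G.Reachable v0 u) :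
    ∃ b, G.Adj v0 b ∧ ∃ p : G.Walk b u, v0 ∉ p.support := by
  obtain ⟨w⟩ := h
  obtain ⟨r, hp⟩ := w.toPath
  cases r with
  | nil => exact absurd rfl hne
  | cons h' q =>
    rw [Walk.cons_isPath_iff] at hp
    exact ⟨_, h', q, hp.2⟩

/-- Removing a vertex from a finite connected trivalent graph with no separating edges
leaves a connected graph. -/
theorem stmt12 (V : Type) [Fintype V] [DecidableEq V] (G : SimpleGraph V)
    [DecidableRel G.Adj] (hconn : G.Connected) (hdeg : ∀ v, G.degree v = 3)
    (hns : ∀ e ∈ G.edgeSet, (G.deleteEdges {e}).Connected) (v0 : V) :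
    (SimpleGraph.induce {v : V | v ≠ v0} G).Connected := by
  have hcard : (G.neighborFinset v0).card = 3 := hdeg v0
  obtain ⟨a, b, c, hab, hac, hbc, habc⟩ := Finset.card_eq_three.mp hcard
  have ha : G.Adj v0 a := by rw [← mem_neighborFinset, habc]; simp
  have hb : G.Adj v0 b := by rw [← mem_neighborFinset, habc]; simp
  have hc : G.Adj v0 c := by rw [← mem_neighborFinset, habc]; simp
  have hmem : ∀ y, G.Adj v0 y → y = a ∨ y = b ∨ y = c := by
    intro y hy
    have : y ∈ G.neighborFinset v0 := (G.mem_neighborFinset v0 y).mpr hy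
    rw [habc] at this; simpa using this
  have key : ∀ x, ∀ hx : G.Adj v0 x, ∃ y, ∃ hy : G.Adj v0 y, y ≠ x ∧
      (G.induce {v : V | v ≠ v0}).Reachable ⟨x, hx.ne'⟩ ⟨y, hy.ne'⟩ := by
    intro x hx
    have he : s(v0, x) ∈ G.edgeSet := G.mem_edgeSet.mpr hx
    have hreach : (G.deleteEdges {s(v0, x)}).Reachable v0 x :=
      (hns _ he).preconnected v0 x
    obtain ⟨y, hy, p, hp⟩ := aux_extract hx.ne hreach
    have hyG : G.Adj v0 y := (G.deleteEdges_le _) hy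
    have hyx : y ≠ x := by
      rintro rfl
      rw [deleteEdges_adj] at hy
      exact hy.2 rfl
    exact ⟨y, hyG, hyx,
      (aux_reach (G.deleteEdges_le _) v0 p hyG.ne' hx.ne' hp).symm⟩
  -- relations among the three neighbors
  have hA := key a ha
  have hB := key b hb
  have hC := key c hc
  obtain ⟨ya, hya, hyaa, hra⟩ := hA
  obtain ⟨yb, hyb, hybb, hrb⟩ := hB
  obtain ⟨yc, hyc, hycc, hrc⟩ := hC
  have hA' : (G.induce {v : V | v ≠ v0}).Reachable ⟨a, ha.ne'⟩ ⟨b, hb.ne'⟩ ∨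
      (G.induce {v : V | v ≠ v0}).Reachable ⟨a, ha.ne'⟩ ⟨c, hc.ne'⟩ := by
    rcases hmem ya hya with rfl | rfl | rfl
    · exact absurd rfl hyaa
    · exact Or.inl hra
    · exact Or.inr hra
  have hB' : (G.induce {v : V | v ≠ v0}).Reachable ⟨b, hb.ne'⟩ ⟨a, ha.ne'⟩ ∨
      (G.induce {v : V | v ≠ v0}).Reachable ⟨b, hb.ne'⟩ ⟨c, hc.ne'⟩ := by
    rcases hmem yb hyb with rfl | rfl | rfl
    · exact Or.inl hrb
    · exact absurd rfl hybb
    · exact Or.inr hrb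
  have hC' : (G.induce {v : V | v ≠ v0}).Reachable ⟨c, hc.ne'⟩ ⟨a, ha.ne'⟩ ∨
      (G.induce {v : V | v ≠ v0}).Reachable ⟨c, hc.ne'⟩ ⟨b, hb.ne'⟩ := by
    rcases hmem yc hyc with rfl | rfl | rfl
    · exact Or.inl hrc
    · exact Or.inr hrc
    · exact absurd rfl hycc
  have hab' : (G.induce {v : V | v ≠ v0}).Reachable ⟨a, ha.ne'⟩ ⟨b, hb.ne'⟩ ∧
      (G.induce {v : V | v ≠ v0}).Reachable ⟨a, ha.ne'⟩ ⟨c, hc.ne'⟩ := by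
    rcases hA' with h1 | h1
    · refine ⟨h1, ?_⟩
      rcases hC' with h2 | h2
      · exact h2.symm
      · exact h1.trans h2.symm
    · refine ⟨?_, h1⟩
      rcases hB' with h2 | h2
      · exact h2.symm
      · exact h1.trans h2.symm
  have main : ∀ u, ∀ hu : u ≠ v0,
      (G.induce {v : V | v ≠ v0}).Reachable ⟨u, hu⟩ ⟨a, ha.ne'⟩ := by
    intro u hu
    obtain ⟨y, hy, p, hp⟩ := aux_extract (Ne.symm hu) (hconn.preconnected v0 u)
    have h1 : (G.induce {v : V | v ≠ v0}).Reachable ⟨y, hy.ne'⟩ ⟨u, hu⟩ :=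
      aux_reach le_rfl v0 p hy.ne' hu hp
    rcases hmem y hy with rfl | rfl | rfl
    · exact h1.symm
    · exact h1.symm.trans hab'.1.symm
    · exact h1.symm.trans hab'.2.symm
  have : Nonempty {v : V | v ≠ v0} := ⟨⟨a, ha.ne'⟩⟩
  refine SimpleGraph.Connected.mk ?_
  rintro ⟨u, hu⟩ ⟨w, hw⟩
  exact (main u hu).trans (main w hw).symm
end
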